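/- For de Sitter space, the wedge W_R ∩ dS^d = { x ∈ dS^d : x₁ > |x₀| } coincides with the order-convex hull of the boost geodesic γ(t) = cosh(t)e₁ + sinh(t)e₀: for every x ∈ dS^d with x₁ > |x₀| there exist s < t with γ(s) ≤ x ≤ γ(t), where y ≤ z means z - y lies in the closed future cone { v : v₀ ≥ 0, v₀² ≥ v₁² + ⋯ + v_d² }. -/
import Mathlib


/-- The wedge { x ∈ dS^d : x₁ > |x₀| } is contained in the order-convex hull of the boost
geodesic γ(t) = (sinh t, cosh t, 0, …, 0): for every such x there are s < t with
γ(s) ≤ x ≤ γ(t) in the causal order given by the closed future cone. -/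
theorem deSitter_wedge_order_convex_hull (d : ℕ) (hd : 1 ≤ d) :
    let Q : (Fin (d+1) → ℝ) → ℝ := fun x => (x 0)^2 - ∑ i : Fin d, (x i.succ)^2
    let γ : ℝ → (Fin (d+1) → ℝ) := fun t i =>
      if i = 0 then Real.sinh t else if i = 1 then Real.cosh t else 0
    ∀ x : Fin (d+1) → ℝ, Q x = -1 → |x 0| < x 1 →
      ∃ s t : ℝ, s < t ∧
        (0 ≤ (x - γ s) 0 ∧ 0 ≤ Q (x - γ s)) ∧
        (0 ≤ (γ t - x) 0 ∧ 0 ≤ Q (γ t - x)) := by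
  intro Q γ x hQ hx
  haveI : NeZero d := ⟨by omega⟩
  set a := x 0 with ha
  set b := x 1 with hb
  have hba : 0 < b - |a| := by linarith
  set c : ℝ := max |a| (1/(b - |a|)) with hc
  have hc0 : 0 < c := lt_of_lt_of_le (by positivity) (le_max_right _ _)
  have hca : |a| ≤ c := le_max_left _ _
  have hcb : 1/(b - |a|) ≤ c := le_max_right _ _
  set M := Real.arsinh c with hMdef
  have hsM : Real.sinh M = c := Real.sinh_arsinh c
  have hchM : c ≤ Real.cosh M := by
    have h := Real.cosh_sub_sinh M
    have := Real.exp_pos (-M)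
    rw [← hsM]; linarith
  have hM0 : 0 < M := by
    have : Real.sinh 0 < Real.sinh M := by
      rw [Real.sinh_zero, hsM]; exact hc0
    exact Real.sinh_lt_sinh.mp this
  -- the key formula for Q (x - γ u)
  have h1 : ∀ i : Fin d, (i.succ = (1 : Fin (d+1))) ↔ i = 0 := by
    intro i
    rw [Fin.ext_iff, Fin.ext_iff, Fin.val_succ, Fin.val_one', Nat.mod_eq_of_lt (by omega)]
    simp
  have hsucc01 : ((0 : Fin d).succ) = (1 : Fin (d+1)) := (h1 0).mpr rfl
  have hγs : ∀ u : ℝ, ∀ i : Fin d, γ u i.succ = if i = 0 then Real.cosh u else 0 := by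
    intro u i
    simp only [γ]
    rw [if_neg (Fin.succ_ne_zero i)]
    by_cases h : i = 0
    · subst h; rw [if_pos hsucc01, if_pos rfl]
    · rw [if_neg (fun hh => h ((h1 i).mp hh)), if_neg h]
  have hγ0 : ∀ u : ℝ, γ u 0 = Real.sinh u := by intro u; simp [γ]
  have hS : (∑ i : Fin d, (x i.succ)^2) = a^2 + 1 := by
    have : a^2 - ∑ i : Fin d, (x i.succ)^2 = -1 := hQ
    linarith
  have key : ∀ u : ℝ, Q (x - γ u) = 2*(b * Real.cosh u - a * Real.sinh u) - 2 := by
    intro u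
    have hsum : ∑ i : Fin d, ((x - γ u) i.succ)^2
        = (∑ i : Fin d, (x i.succ)^2)
          - ∑ i : Fin d, (if i = (0 : Fin d) then 2 * (b * Real.cosh u) - (Real.cosh u)^2 else 0) := by
      rw [← Finset.sum_sub_distrib]
      refine Finset.sum_congr rfl fun i _ => ?_
      rw [Pi.sub_apply, hγs u i]
      by_cases h : i = 0
      · subst h
        rw [if_pos rfl, if_pos rfl, hsucc01, ← hb]; ring
      · rw [if_neg h, if_neg h]; ring
    have hite : ∑ i : Fin d, (if i = (0 : Fin d) then 2 * (b * Real.cosh u) - (Real.cosh u)^2 else 0)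
        = 2 * (b * Real.cosh u) - (Real.cosh u)^2 := by
      rw [Finset.sum_ite_eq' Finset.univ (0 : Fin d)]
      simp
    have hid : Real.cosh u ^ 2 - Real.sinh u ^ 2 = 1 := Real.cosh_sq_sub_sinh_sq u
    have hQx : Q (x - γ u) = ((x - γ u) 0)^2 - ∑ i : Fin d, ((x - γ u) i.succ)^2 := rfl
    rw [hQx, hsum, hite, hS, Pi.sub_apply, hγ0, ← ha]
    ring_nf
    nlinarith [hid]
  have hQneg : ∀ u : ℝ, Q (γ u - x) = Q (x - γ u) := by
    intro u
    have h : γ u - x = -(x - γ u) := (neg_sub _ _).symm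
    rw [h]
    simp only [Q, Pi.neg_apply, neg_sq]
  have habs1 : -|a| ≤ a := neg_abs_le a
  have habs2 : a ≤ |a| := le_abs_self a
  have hmain : (b - |a|) * Real.cosh M ≥ 1 := by
    have h1 : (b - |a|) * (1/(b - |a|)) ≤ (b - |a|) * Real.cosh M :=
      mul_le_mul_of_nonneg_left (hcb.trans hchM) hba.le
    have h2 : (b - |a|) * (1/(b - |a|)) = 1 := by field_simp
    linarith
  have hac : |a| * c ≤ |a| * Real.cosh M :=
    mul_le_mul_of_nonneg_left hchM (abs_nonneg a)
  refine ⟨-M, M, by linarith, ⟨?_, ?_⟩, ⟨?_, ?_⟩⟩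
  · have : (x - γ (-M)) 0 = a + c := by
      rw [Pi.sub_apply, hγ0, Real.sinh_neg, hsM, ← ha]; ring
    rw [this]; linarith
  · rw [key, Real.sinh_neg, Real.cosh_neg, hsM]
    nlinarith [mul_nonneg (by linarith : (0:ℝ) ≤ a + |a|) hc0.le]
  · have : (γ M - x) 0 = c - a := by
      rw [Pi.sub_apply, hγ0, hsM, ← ha]
    rw [this]; linarith
  · rw [hQneg, key, hsM]
    nlinarith [mul_nonneg (by linarith : (0:ℝ) ≤ |a| - a) hc0.le]
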